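/- For positive integers n1, n2, the product of two Bernoulli polynomials satisfies B_{n1}(q) B_{n2}(q) = \sum_{k=0}^{K} [ n1 \binom{n2}{2k} + n2 \binom{n1}{2k} ] \frac{B_{2k}}{n1+n2-2k} B_{n1+n2-2k}(q) + (-1)^{n1+1} \frac{n1! n2!}{(n1+n2)!} B_{n1+n2}, where K = max(\lfloor n1/2 \rfloor, \lfloor n2/2 \rfloor). -/

import Mathlib

open Polynomial Finset

noncomputable def L (p : Polynomial ℚ) : ℚ := p.sum fun k a => a / (k + 1)

lemma L_add (p q : Polynomial ℚ) : L (p + q) = L p + L q := by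
  unfold L
  apply Polynomial.sum_add_index <;> intros <;> simp [add_div]

lemma L_monomial (n : ℕ) (a : ℚ) : L (Polynomial.monomial n a) = a / (n + 1) := by
  unfold L
  apply Polynomial.sum_monomial_index
  simp

lemma L_C (c : ℚ) : L (Polynomial.C c) = c := by
  rw [← Polynomial.monomial_zero_left, L_monomial]; norm_num

lemma L_smul (c : ℚ) (p : Polynomial ℚ) : L (c • p) = c * L p := by
  unfold L
  rw [Polynomial.sum_smul_index p c (fun k a => a / (k+1)) (fun i => by simp), Polynomial.sum, Polynomial.sum,
    Finset.mul_sum]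
  exact Finset.sum_congr rfl fun i _ => by rw [mul_div_assoc]

lemma L_C_mul (c : ℚ) (p : Polynomial ℚ) : L (Polynomial.C c * p) = c * L p := by
  rw [← Polynomial.smul_eq_C_mul, L_smul]

lemma L_sub (p q : Polynomial ℚ) : L (p - q) = L p - L q := by
  have : p - q = p + (-1 : ℚ) • q := by ring_nf; rw [neg_one_smul]; ring
  rw [this, L_add, L_smul]; ring

lemma L_derivative (p : Polynomial ℚ) :
    L (Polynomial.derivative p) = p.eval 1 - p.eval 0 := by
  induction p using Polynomial.induction_on' with
  | add p q hp hq => rw [map_add, L_add, hp, hq]; simp; ring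
  | monomial n a =>
    rw [Polynomial.derivative_monomial, L_monomial]
    rcases n with _ | m
    · simp
    · simp only [Nat.add_sub_cancel, Polynomial.eval_monomial, one_pow, mul_one]
      rw [zero_pow (Nat.succ_ne_zero m)]
      push_cast
      field_simp
      simp

lemma L_zero : L 0 = 0 := by unfold L; simp

lemma eq_of_derivative_eq (p q : Polynomial ℚ) (hd : Polynomial.derivative p = Polynomial.derivative q)
    (hL : L p = L q) : p = q := by
  have h0 : Polynomial.derivative (p - q) = 0 := by rw [map_sub, hd, sub_self]
  have hdeg : (p - q).natDegree = 0 := Polynomial.natDegree_eq_zero_of_derivative_eq_zero h0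
  have hc : p - q = Polynomial.C ((p - q).coeff 0) := Polynomial.eq_C_of_natDegree_eq_zero hdeg
  have : L (p - q) = 0 := by rw [L_sub, hL, sub_self]
  rw [hc, L_C] at this
  rw [this, map_zero] at hc
  exact sub_eq_zero.mp hc

lemma bern_odd_zero {n : ℕ} (h : Odd n) (h2 : 1 < n) : _root_.bernoulli n = 0 := by
  rw [bernoulli_eq_bernoulli'_of_ne_one (by omega)]
  exact bernoulli'_eq_zero_of_odd h h2

lemma bern_eval_one {n : ℕ} (hn : n ≠ 1) :
    (Polynomial.bernoulli n).eval 1 = _root_.bernoulli n := by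
  rw [Polynomial.bernoulli_eval_one, bernoulli_eq_bernoulli'_of_ne_one hn]

lemma L_bernoulli (n : ℕ) (hn : 1 ≤ n) : L (Polynomial.bernoulli n) = 0 := by
  have h := L_derivative (Polynomial.bernoulli (n + 1))
  rw [Polynomial.derivative_bernoulli_add_one n, bern_eval_one (by omega),
    Polynomial.bernoulli_eval_zero, sub_self] at h
  have hc : ((n : ℚ[X]) + 1) * Polynomial.bernoulli n
      = Polynomial.C ((n : ℚ) + 1) * Polynomial.bernoulli n := by
    simp only [map_add, map_one, Polynomial.C_eq_natCast]
  rw [hc, L_C_mul] at h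
  have hne : ((n : ℚ) + 1) ≠ 0 := by positivity
  exact (mul_eq_zero.mp h).resolve_left hne

lemma L_key (a b : ℕ) :
    ((a : ℚ) + 1) * L (Polynomial.bernoulli a * Polynomial.bernoulli (b + 1))
      + ((b : ℚ) + 1) * L (Polynomial.bernoulli (a + 1) * Polynomial.bernoulli b)
    = (Polynomial.bernoulli (a + 1)).eval 1 * (Polynomial.bernoulli (b + 1)).eval 1
      - _root_.bernoulli (a + 1) * _root_.bernoulli (b + 1) := by
  have h := L_derivative (Polynomial.bernoulli (a + 1) * Polynomial.bernoulli (b + 1))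
  rw [Polynomial.derivative_mul, Polynomial.derivative_bernoulli_add_one a,
    Polynomial.derivative_bernoulli_add_one b] at h
  have hre : ((a : ℚ[X]) + 1) * Polynomial.bernoulli a * Polynomial.bernoulli (b + 1)
        + Polynomial.bernoulli (a + 1) * (((b : ℚ[X]) + 1) * Polynomial.bernoulli b)
      = Polynomial.C ((a : ℚ) + 1) * (Polynomial.bernoulli a * Polynomial.bernoulli (b + 1))
        + Polynomial.C ((b : ℚ) + 1)
          * (Polynomial.bernoulli (a + 1) * Polynomial.bernoulli b) := by
    simp only [map_add, map_one, Polynomial.C_eq_natCast]; ring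
  rw [hre, L_add, L_C_mul, L_C_mul, Polynomial.eval_mul, Polynomial.eval_mul,
    Polynomial.bernoulli_eval_zero, Polynomial.bernoulli_eval_zero] at h
  exact h

lemma L_mul_bernoulli : ∀ b, 1 ≤ b → ∀ a, 1 ≤ a →
    L (Polynomial.bernoulli a * Polynomial.bernoulli b)
      = (-1) ^ (a + 1) * ((a.factorial : ℚ) * (b.factorial : ℚ) / ((a + b).factorial : ℚ))
          * _root_.bernoulli (a + b) := by
  intro b
  induction b with
  | zero => omega
  | succ b ih =>
    intro _ a ha
    rcases Nat.eq_zero_or_pos b with hb0 | hb1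
    · -- b + 1 = 1
      subst hb0
      have h := L_key a 0
      rw [Polynomial.bernoulli_zero, mul_one, L_bernoulli (a + 1) (by omega),
        bern_eval_one (n := a + 1) (by omega), Polynomial.bernoulli_eval_one,
        bernoulli'_one, _root_.bernoulli_one] at h
      have ha1 : ((a : ℚ) + 1) ≠ 0 := by positivity
      have hL : L (Polynomial.bernoulli a * Polynomial.bernoulli 1)
          = _root_.bernoulli (a + 1) / ((a : ℚ) + 1) := by
        field_simp at h ⊢
        linarith
      rw [hL]
      rcases Nat.even_or_odd a with he | ho
      · have : _root_.bernoulli (a + 1) = 0 :=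
          bern_odd_zero (by simpa using he.add_one) (by omega)
        simp [this]
      · have hev : Even (a + 1) := ho.add_one
        rw [hev.neg_one_pow]
        have hfs : (((a + 1).factorial : ℕ) : ℚ) = ((a : ℚ) + 1) * (a.factorial : ℚ) := by
          rw [Nat.factorial_succ]; push_cast; ring
        have : (a.factorial : ℚ) ≠ 0 := by positivity
        rw [hfs]
        field_simp
        ring
    · -- step
      have h := L_key a b
      rw [bern_eval_one (n := a + 1) (by omega), bern_eval_one (n := b + 1) (by omega),
        sub_self] at h
      have ihv := ih hb1 (a + 1) (by omega)
      have ha1 : ((a : ℚ) + 1) ≠ 0 := by positivity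
      have hL : L (Polynomial.bernoulli a * Polynomial.bernoulli (b + 1))
          = -(((b : ℚ) + 1) / ((a : ℚ) + 1))
              * L (Polynomial.bernoulli (a + 1) * Polynomial.bernoulli b) := by
        field_simp
        linarith
      have e1 : a + 1 + b = a + (b + 1) := by omega
      rw [e1] at ihv
      rw [hL, ihv]
      have hfa : (((a + 1).factorial : ℕ) : ℚ) = ((a : ℚ) + 1) * (a.factorial : ℚ) := by
        rw [Nat.factorial_succ]; push_cast; ring
      have hfb : (((b + 1).factorial : ℕ) : ℚ) = ((b : ℚ) + 1) * (b.factorial : ℚ) := by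
        rw [Nat.factorial_succ]; push_cast; ring
      rw [hfa, hfb, pow_succ]
      have hf1 : ((a + (b + 1)).factorial : ℚ) ≠ 0 := by positivity
      have hf2 : (a.factorial : ℚ) ≠ 0 := by positivity
      have hf3 : (b.factorial : ℚ) ≠ 0 := by positivity
      field_simp

noncomputable def coefQ (m n k : ℕ) : ℚ :=
  ((m : ℚ) * (n.choose (2 * k) : ℚ) + (n : ℚ) * (m.choose (2 * k) : ℚ))
    * (_root_.bernoulli (2 * k) / ((m + n - 2 * k : ℕ) : ℚ))

noncomputable def constQ (m n : ℕ) : ℚ :=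
  (-1) ^ (m + 1) * ((m.factorial : ℚ) * (n.factorial : ℚ) / ((m + n).factorial : ℚ))
    * _root_.bernoulli (m + n)

noncomputable def rhsQ (m n : ℕ) : ℚ[X] :=
  (∑ k ∈ Finset.range (max (m / 2) (n / 2) + 1),
      Polynomial.C (coefQ m n k) * Polynomial.bernoulli (m + n - 2 * k))
    + Polynomial.C (constQ m n)

lemma coefQ_eq_zero {m n k : ℕ} (hm : m < 2 * k) (hn : n < 2 * k) : coefQ m n k = 0 := by
  unfold coefQ
  rw [Nat.choose_eq_zero_of_lt hm, Nat.choose_eq_zero_of_lt hn]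
  simp

lemma sum_ext (m n N : ℕ) (hN : max (m / 2) (n / 2) ≤ N) :
    ∑ k ∈ Finset.range (max (m / 2) (n / 2) + 1),
        Polynomial.C (coefQ m n k) * Polynomial.bernoulli (m + n - 2 * k)
      = ∑ k ∈ Finset.range (N + 1),
          Polynomial.C (coefQ m n k) * Polynomial.bernoulli (m + n - 2 * k) := by
  apply Finset.sum_subset
  · exact Finset.range_subset_range.2 (by omega)
  · intro k hk hnk
    rw [Finset.mem_range] at hk hnk
    have h1 : m / 2 < k := by have := le_max_left (m / 2) (n / 2); omega
    have h2 : n / 2 < k := by have := le_max_right (m / 2) (n / 2); omega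
    rw [coefQ_eq_zero (by omega) (by omega), map_zero, zero_mul]

lemma L_finset_sum {α : Type*} (s : Finset α) (f : α → ℚ[X]) :
    L (∑ i ∈ s, f i) = ∑ i ∈ s, L (f i) := by
  classical
  induction s using Finset.cons_induction with
  | empty => simpa using L_zero
  | cons a s ha ih => rw [Finset.sum_cons, Finset.sum_cons, L_add, ih]

lemma L_rhsQ (m n : ℕ) (hm : 1 ≤ m) (hn : 1 ≤ n) : L (rhsQ m n) = constQ m n := by
  unfold rhsQ
  rw [L_add, L_C, L_finset_sum]
  rw [Finset.sum_eq_zero, zero_add]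
  intro k hk
  rw [Finset.mem_range] at hk
  have h1 : k ≤ m / 2 ∨ k ≤ n / 2 := by
    rcases le_max_iff.mp (Nat.le_of_lt_succ hk) with h | h
    · exact Or.inl h
    · exact Or.inr h
  rw [L_C_mul, L_bernoulli _ (by omega), mul_zero]

lemma derivative_rhsQ (m n : ℕ) :
    Polynomial.derivative (rhsQ m n)
      = ∑ k ∈ Finset.range (max (m / 2) (n / 2) + 1),
          Polynomial.C (coefQ m n k * ((m + n - 2 * k : ℕ) : ℚ))
            * Polynomial.bernoulli (m + n - 2 * k - 1) := by
  unfold rhsQ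
  rw [derivative_add, Polynomial.derivative_C, add_zero, Polynomial.derivative_sum]
  refine Finset.sum_congr rfl fun k _ => ?_
  rw [Polynomial.derivative_C_mul, Polynomial.derivative_bernoulli, map_mul,
    Polynomial.C_eq_natCast]
  ring

lemma coefQ_comm (m n k : ℕ) : coefQ m n k = coefQ n m k := by
  unfold coefQ
  rw [Nat.add_comm m n]
  ring

lemma constQ_comm (m n : ℕ) (hm : 1 ≤ m) (hn : 1 ≤ n) : constQ m n = constQ n m := by
  unfold constQ
  rcases Nat.even_or_odd (m + n) with he | ho
  · have hpow : ((-1 : ℚ)) ^ (m + 1) = (-1) ^ (n + 1) := by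
      rcases Nat.even_or_odd m with hm' | hm'
      · have hn' : Even n := (Nat.even_add.mp he).mp hm'
        rw [(Even.add_one hm').neg_one_pow, (Even.add_one hn').neg_one_pow]
      · have hn' : Odd n := by
          rcases Nat.even_or_odd n with h | h
          · exact absurd (hm'.add_even h) (Nat.not_odd_iff_even.mpr he)
          · exact h
        rw [(Odd.add_one hm').neg_one_pow, (Odd.add_one hn').neg_one_pow]
    rw [hpow, Nat.add_comm m n]
    ring
  · have hz : _root_.bernoulli (m + n) = 0 := bern_odd_zero ho (by omega)
    have hz2 : _root_.bernoulli (n + m) = 0 := by rwa [Nat.add_comm]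
    rw [hz, hz2, mul_zero, mul_zero]

lemma rhsQ_comm (m n : ℕ) (hm : 1 ≤ m) (hn : 1 ≤ n) : rhsQ m n = rhsQ n m := by
  unfold rhsQ
  rw [constQ_comm m n hm hn]
  congr 1
  rw [max_comm]
  refine Finset.sum_congr rfl fun k _ => ?_
  rw [coefQ_comm, Nat.add_comm m n]

lemma choose_cast_id (m k : ℕ) (hm : 1 ≤ m) :
    ((m - 1).choose k : ℚ) * m = (m.choose k : ℚ) * ((m - k : ℕ) : ℚ) := by
  have h := Nat.choose_mul_succ_eq (m - 1) k
  have e : m - 1 + 1 = m := by omega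
  rw [e] at h
  exact_mod_cast congrArg (Nat.cast : ℕ → ℚ) h

lemma step_coef (m n k : ℕ) (hm : 2 ≤ m) (hn : 2 ≤ n) (hk : k ≤ max (m / 2) (n / 2)) :
    (m : ℚ) * coefQ (m - 1) n k + (n : ℚ) * coefQ m (n - 1) k
      = coefQ m n k * ((m + n - 2 * k : ℕ) : ℚ) := by
  have hj : 2 * k ≤ m ∨ 2 * k ≤ n := by
    rcases le_max_iff.mp hk with h | h
    · left; omega
    · right; omega
  have hkmn : 2 * k + 2 ≤ m + n := by rcases hj with h | h <;> omega
  have hcm := choose_cast_id m (2 * k) (by omega)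
  have hcn := choose_cast_id n (2 * k) (by omega)
  have d0 : ((m + n - 2 * k : ℕ) : ℚ) = (m : ℚ) + n - 2 * k := by
    rw [Nat.cast_sub (by omega)]; push_cast; ring
  have d1 : ((m - 1 + n - 2 * k : ℕ) : ℚ) = (m : ℚ) + n - 2 * k - 1 := by
    rw [show m - 1 + n - 2 * k = m + n - (2 * k + 1) by omega, Nat.cast_sub (by omega)]
    push_cast; ring
  have d2 : ((m + (n - 1) - 2 * k : ℕ) : ℚ) = (m : ℚ) + n - 2 * k - 1 := by
    rw [show m + (n - 1) - 2 * k = m + n - (2 * k + 1) by omega, Nat.cast_sub (by omega)]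
    push_cast; ring
  have dm1 : ((m - 1 : ℕ) : ℚ) = (m : ℚ) - 1 := by
    rw [Nat.cast_sub (by omega)]; push_cast; ring
  have dn1 : ((n - 1 : ℕ) : ℚ) = (n : ℚ) - 1 := by
    rw [Nat.cast_sub (by omega)]; push_cast; ring
  have hd0 : ((m : ℚ) + n - 2 * k) ≠ 0 := by
    have : (2 * (k : ℚ) + 2) ≤ (m : ℚ) + n := by exact_mod_cast hkmn
    intro h; rw [sub_eq_zero] at h; nlinarith
  have hd1 : ((m : ℚ) + n - 2 * k - 1) ≠ 0 := by
    have : (2 * (k : ℚ) + 2) ≤ (m : ℚ) + n := by exact_mod_cast hkmn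
    intro h; nlinarith
  unfold coefQ
  rw [d0, d1, d2, dm1, dn1]
  have key : (m : ℚ) * (((m : ℚ) - 1) * (n.choose (2 * k) : ℚ)
        + (n : ℚ) * ((m - 1).choose (2 * k) : ℚ))
      + (n : ℚ) * ((m : ℚ) * ((n - 1).choose (2 * k) : ℚ)
        + ((n : ℚ) - 1) * (m.choose (2 * k) : ℚ))
      = ((m : ℚ) * (n.choose (2 * k) : ℚ) + (n : ℚ) * (m.choose (2 * k) : ℚ))
          * ((m : ℚ) + n - 2 * k - 1) := by
    rcases le_or_gt (2 * k) m with h2m | h2m <;> rcases le_or_gt (2 * k) n with h2n | h2n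
    · rw [Nat.cast_sub h2m] at hcm
      rw [Nat.cast_sub h2n] at hcn
      push_cast at hcm hcn
      linear_combination (n : ℚ) * hcm + (m : ℚ) * hcn
    · rw [Nat.cast_sub h2m] at hcm
      push_cast at hcm
      rw [Nat.choose_eq_zero_of_lt h2n, Nat.choose_eq_zero_of_lt (show n - 1 < 2 * k by omega)]
      push_cast
      linear_combination (n : ℚ) * hcm
    · rw [Nat.cast_sub h2n] at hcn
      push_cast at hcn
      rw [Nat.choose_eq_zero_of_lt h2m, Nat.choose_eq_zero_of_lt (show m - 1 < 2 * k by omega)]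
      push_cast
      linear_combination (m : ℚ) * hcn
    · omega
  calc (m : ℚ) * ((((m : ℚ) - 1) * (n.choose (2 * k) : ℚ)
            + (n : ℚ) * ((m - 1).choose (2 * k) : ℚ))
          * (_root_.bernoulli (2 * k) / ((m : ℚ) + n - 2 * k - 1)))
        + (n : ℚ) * (((m : ℚ) * ((n - 1).choose (2 * k) : ℚ)
            + ((n : ℚ) - 1) * (m.choose (2 * k) : ℚ))
          * (_root_.bernoulli (2 * k) / ((m : ℚ) + n - 2 * k - 1)))
      = ((m : ℚ) * (((m : ℚ) - 1) * (n.choose (2 * k) : ℚ)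
            + (n : ℚ) * ((m - 1).choose (2 * k) : ℚ))
          + (n : ℚ) * ((m : ℚ) * ((n - 1).choose (2 * k) : ℚ)
            + ((n : ℚ) - 1) * (m.choose (2 * k) : ℚ)))
          * (_root_.bernoulli (2 * k) / ((m : ℚ) + n - 2 * k - 1)) := by ring
    _ = (((m : ℚ) * (n.choose (2 * k) : ℚ) + (n : ℚ) * (m.choose (2 * k) : ℚ))
          * ((m : ℚ) + n - 2 * k - 1))
          * (_root_.bernoulli (2 * k) / ((m : ℚ) + n - 2 * k - 1)) := by rw [key]
    _ = ((m : ℚ) * (n.choose (2 * k) : ℚ) + (n : ℚ) * (m.choose (2 * k) : ℚ))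
          * _root_.bernoulli (2 * k) := by
        field_simp
    _ = ((m : ℚ) * (n.choose (2 * k) : ℚ) + (n : ℚ) * (m.choose (2 * k) : ℚ))
          * (_root_.bernoulli (2 * k) / ((m : ℚ) + n - 2 * k)) * ((m : ℚ) + n - 2 * k) := by
        field_simp

lemma const_cancel (m n : ℕ) (hm : 2 ≤ m) (hn : 2 ≤ n) :
    (m : ℚ) * constQ (m - 1) n + (n : ℚ) * constQ m (n - 1) = 0 := by
  unfold constQ
  have e1 : m - 1 + n = m + n - 1 := by omega
  have e2 : m + (n - 1) = m + n - 1 := by omega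
  have e3 : m - 1 + 1 = m := by omega
  rw [e1, e2, e3]
  have f1 : (m : ℚ) * ((m - 1).factorial : ℚ) = (m.factorial : ℚ) := by
    exact_mod_cast congrArg (Nat.cast : ℕ → ℚ) (Nat.mul_factorial_pred (by omega))
  have f2 : (n : ℚ) * ((n - 1).factorial : ℚ) = (n.factorial : ℚ) := by
    exact_mod_cast congrArg (Nat.cast : ℕ → ℚ) (Nat.mul_factorial_pred (by omega))
  have hp : ((-1 : ℚ)) ^ (m + 1) = -(-1 : ℚ) ^ m := by rw [pow_succ]; ring
  rw [hp]
  linear_combination ((-1 : ℚ) ^ m * ((n.factorial : ℚ) / ((m + n - 1).factorial : ℚ))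
      * _root_.bernoulli (m + n - 1)) * f1
    - ((-1 : ℚ) ^ m * ((m.factorial : ℚ) / ((m + n - 1).factorial : ℚ))
      * _root_.bernoulli (m + n - 1)) * f2

lemma base_coef (n k : ℕ) (hn : 2 ≤ n) (hk : 2 * k + 1 ≤ n) :
    (if k = 0 then (1 : ℚ) else 0) + (n : ℚ) * coefQ 1 (n - 1) k
      = coefQ 1 n k * ((1 + n - 2 * k : ℕ) : ℚ) := by
  have hcn := choose_cast_id n (2 * k) (by omega)
  rw [Nat.cast_sub (by omega)] at hcn
  push_cast at hcn
  unfold coefQ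
  have d0 : ((1 + n - 2 * k : ℕ) : ℚ) = (n : ℚ) + 1 - 2 * k := by
    rw [Nat.cast_sub (by omega)]; push_cast; ring
  have d1 : ((1 + (n - 1) - 2 * k : ℕ) : ℚ) = (n : ℚ) - 2 * k := by
    rw [show 1 + (n - 1) - 2 * k = n - 2 * k by omega, Nat.cast_sub (by omega)]
    push_cast; ring
  have dn1 : ((n - 1 : ℕ) : ℚ) = (n : ℚ) - 1 := by
    rw [Nat.cast_sub (by omega)]; push_cast; ring
  have hd0 : ((n : ℚ) + 1 - 2 * k) ≠ 0 := by
    have : (2 * (k : ℚ) + 1) ≤ (n : ℚ) := by exact_mod_cast hk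
    intro h; nlinarith
  have hd1 : ((n : ℚ) - 2 * k) ≠ 0 := by
    have : (2 * (k : ℚ) + 1) ≤ (n : ℚ) := by exact_mod_cast hk
    intro h; nlinarith
  rw [d0, d1, dn1]
  rcases Nat.eq_zero_or_pos k with hk0 | hk1
  · subst hk0
    simp only [if_pos, Nat.mul_zero, Nat.choose_zero_right, _root_.bernoulli_zero]
    push_cast
    field_simp
    rw [mul_zero, sub_zero, show (1:ℚ) + ((n:ℚ) - 1) = n by ring, mul_self_div_self]
  · rw [if_neg (by omega)]
    have hc1 : (Nat.choose 1 (2 * k) : ℚ) = 0 := by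
      rw [Nat.choose_eq_zero_of_lt (by omega)]; simp
    rw [hc1]
    field_simp
    linear_combination _root_.bernoulli (2 * k) * hcn

lemma step_poly (m n : ℕ) (hm : 2 ≤ m) (hn : 2 ≤ n) :
    Polynomial.C (m : ℚ) * rhsQ (m - 1) n + Polynomial.C (n : ℚ) * rhsQ m (n - 1)
      = Polynomial.derivative (rhsQ m n) := by
  have hM1 : max ((m - 1) / 2) (n / 2) ≤ max (m / 2) (n / 2) :=
    max_le (le_trans (by omega) (le_max_left (m / 2) (n / 2))) (le_max_right _ _)
  have hM2 : max (m / 2) ((n - 1) / 2) ≤ max (m / 2) (n / 2) :=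
    max_le (le_max_left _ _) (le_trans (by omega) (le_max_right (m / 2) (n / 2)))
  rw [derivative_rhsQ]
  unfold rhsQ
  rw [sum_ext (m - 1) n _ hM1, sum_ext m (n - 1) _ hM2]
  rw [mul_add, mul_add, Finset.mul_sum, Finset.mul_sum, ← map_mul, ← map_mul,
    add_add_add_comm, ← Finset.sum_add_distrib, ← map_add, const_cancel m n hm hn, map_zero,
    add_zero]
  refine Finset.sum_congr rfl fun k hk => ?_
  have e1 : m - 1 + n - 2 * k = m + n - 2 * k - 1 := by omega
  have e2 : m + (n - 1) - 2 * k = m + n - 2 * k - 1 := by omega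
  rw [e1, e2, ← mul_assoc, ← mul_assoc, ← map_mul, ← map_mul, ← add_mul, ← map_add,
    step_coef m n k hm hn (by rw [Finset.mem_range] at hk; omega)]

lemma base_const (n : ℕ) (hn : 2 ≤ n) :
    (n : ℚ) * constQ 1 (n - 1) = _root_.bernoulli n := by
  unfold constQ
  rw [show 1 + (n - 1) = n by omega]
  have f2 : (n : ℚ) * ((n - 1).factorial : ℚ) = (n.factorial : ℚ) := by
    exact_mod_cast congrArg (Nat.cast : ℕ → ℚ) (Nat.mul_factorial_pred (by omega))
  have hf : (n.factorial : ℚ) ≠ 0 := by positivity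
  rw [Nat.factorial_one]
  field_simp
  linear_combination _root_.bernoulli n * f2

lemma base_poly (n : ℕ) (hn : 2 ≤ n) :
    Polynomial.bernoulli n + Polynomial.C (n : ℚ) * rhsQ 1 (n - 1)
      = Polynomial.derivative (rhsQ 1 n) := by
  have hM1 : max (1 / 2) ((n - 1) / 2) ≤ max (1 / 2) (n / 2) :=
    max_le (le_max_left _ _) (le_trans (by omega) (le_max_right (1 / 2) (n / 2)))
  rw [derivative_rhsQ]
  unfold rhsQ
  rw [sum_ext 1 (n - 1) _ hM1]
  have hPB : Polynomial.bernoulli n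
      = ∑ k ∈ Finset.range (max (1 / 2) (n / 2) + 1),
          Polynomial.C (if k = 0 then (1 : ℚ) else 0) * Polynomial.bernoulli (n - 2 * k) := by
    rw [Finset.sum_eq_single 0]
    · simp
    · intro k _ hk0
      rw [if_neg hk0, map_zero, zero_mul]
    · intro h
      exact absurd (Finset.mem_range.mpr (by omega)) h
  rw [hPB, mul_add, Finset.mul_sum, ← map_mul, ← add_assoc, ← Finset.sum_add_distrib]
  have hL : ∀ k : ℕ, Polynomial.C (if k = 0 then (1 : ℚ) else 0)
        * Polynomial.bernoulli (n - 2 * k)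
      + Polynomial.C (n : ℚ) * (Polynomial.C (coefQ 1 (n - 1) k)
        * Polynomial.bernoulli (1 + (n - 1) - 2 * k))
      = Polynomial.C ((if k = 0 then (1 : ℚ) else 0) + (n : ℚ) * coefQ 1 (n - 1) k)
        * Polynomial.bernoulli (n - 2 * k) := by
    intro k
    rw [show 1 + (n - 1) - 2 * k = n - 2 * k by omega, ← mul_assoc, ← map_mul, ← add_mul,
      ← map_add]
  have hR : ∀ k : ℕ, 1 + n - 2 * k - 1 = n - 2 * k := fun k => by omega
  simp only [hL, hR]
  rw [base_const n hn]
  have hK : (1 : ℕ) / 2 ⊔ n / 2 = n / 2 := by simp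
  rw [hK]
  rcases Nat.even_or_odd n with he | ho
  · obtain ⟨t, ht⟩ := he
    have h2 : 2 * (n / 2) = n := by omega
    rw [Finset.sum_range_succ, Finset.sum_range_succ]
    have htopL : ((if n / 2 = 0 then (1 : ℚ) else 0) + (n : ℚ) * coefQ 1 (n - 1) (n / 2))
        = 0 := by
      rw [coefQ_eq_zero (by omega) (by omega), if_neg (by omega)]
      ring
    have htopR : coefQ 1 n (n / 2) * ((1 + n - 2 * (n / 2) : ℕ) : ℚ)
        = _root_.bernoulli n := by
      unfold coefQ
      rw [h2, Nat.choose_self, Nat.choose_eq_zero_of_lt (by omega : 1 < n),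
        show 1 + n - n = 1 by omega]
      norm_num
    rw [htopL, htopR, map_zero, zero_mul, add_zero, h2, Nat.sub_self,
      Polynomial.bernoulli_zero, mul_one]
    congr 1
    refine Finset.sum_congr rfl fun k hk => ?_
    rw [Finset.mem_range] at hk
    rw [base_coef n k hn (by omega)]
  · have hb : _root_.bernoulli n = 0 := bern_odd_zero ho (by omega)
    rw [hb, map_zero, add_zero]
    refine Finset.sum_congr rfl fun k hk => ?_
    rw [Finset.mem_range] at hk
    obtain ⟨t, ht⟩ := ho
    rw [base_coef n k hn (by omega)]

lemma b2val : _root_.bernoulli 2 = 1 / 6 := by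
  rw [bernoulli_eq_bernoulli'_of_ne_one (by norm_num), bernoulli'_two]

lemma pb1 : Polynomial.bernoulli 1 = Polynomial.X - Polynomial.C (1 / 2 : ℚ) := by
  rw [Polynomial.bernoulli]
  rw [Finset.sum_range_succ, Finset.sum_range_succ, Finset.sum_range_zero]
  norm_num [_root_.bernoulli_one, _root_.bernoulli_zero]
  simp [Polynomial.C_1, sub_eq_add_neg, ← Polynomial.X_pow_eq_monomial]

lemma pb2 : Polynomial.bernoulli 2
    = Polynomial.X ^ 2 - Polynomial.X + Polynomial.C (1 / 6 : ℚ) := by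
  rw [Polynomial.bernoulli]
  rw [Finset.sum_range_succ, Finset.sum_range_succ, Finset.sum_range_succ,
    Finset.sum_range_zero]
  norm_num [_root_.bernoulli_one, _root_.bernoulli_zero, b2val]
  simp [Polynomial.C_1, sub_eq_add_neg, ← Polynomial.X_pow_eq_monomial]

lemma q11 : Polynomial.bernoulli 1 * Polynomial.bernoulli 1 = rhsQ 1 1 := by
  unfold rhsQ
  have : max (1 / 2) (1 / 2) = 0 := by norm_num
  rw [this]
  rw [Finset.sum_range_one]
  have hc : coefQ 1 1 0 = 1 := by
    unfold coefQ
    norm_num [_root_.bernoulli_zero]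
  have hk : constQ 1 1 = 1 / 12 := by
    unfold constQ
    norm_num [b2val, Nat.factorial]
  rw [hc, hk]
  norm_num
  rw [pb2]
  apply Polynomial.funext
  intro x
  simp
  ring

lemma mainQ : ∀ N m n : ℕ, m + n ≤ N → 1 ≤ m → 1 ≤ n →
    Polynomial.bernoulli m * Polynomial.bernoulli n = rhsQ m n := by
  intro N
  induction N with
  | zero => intro m n h hm hn; omega
  | succ N ih =>
    intro m n hmn hm hn
    have key1 : ∀ n', 2 ≤ n' → n' ≤ N →
        Polynomial.bernoulli 1 * Polynomial.bernoulli n' = rhsQ 1 n' := by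
      intro n' hn' hN'
      apply eq_of_derivative_eq
      · rw [Polynomial.derivative_mul, Polynomial.derivative_bernoulli 1,
          Polynomial.derivative_bernoulli n']
        have hre : ((1 : ℕ) : ℚ[X]) * Polynomial.bernoulli (1 - 1) * Polynomial.bernoulli n'
              + Polynomial.bernoulli 1 * (((n' : ℕ) : ℚ[X]) * Polynomial.bernoulli (n' - 1))
            = Polynomial.bernoulli n'
              + Polynomial.C ((n' : ℚ))
                * (Polynomial.bernoulli 1 * Polynomial.bernoulli (n' - 1)) := by
          rw [Polynomial.C_eq_natCast]
          norm_num [Polynomial.bernoulli_zero]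
          ring
        rw [hre, ih 1 (n' - 1) (by omega) le_rfl (by omega), base_poly n' hn']
      · rw [L_mul_bernoulli n' (by omega) 1 (by omega), L_rhsQ 1 n' (by omega) (by omega)]
        rfl
    rcases eq_or_lt_of_le hm with hm1 | hm2
    · rcases eq_or_lt_of_le hn with hn1 | hn2
      · rw [← hm1, ← hn1]
        exact q11
      · rw [← hm1]
        exact key1 n (by omega) (by omega)
    · rcases eq_or_lt_of_le hn with hn1 | hn2
      · subst hn1
        rw [mul_comm, rhsQ_comm m 1 hm le_rfl]
        exact key1 m (by omega) (by omega)
      · apply eq_of_derivative_eq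
        · rw [Polynomial.derivative_mul, Polynomial.derivative_bernoulli m,
            Polynomial.derivative_bernoulli n]
          have hre : ((m : ℕ) : ℚ[X]) * Polynomial.bernoulli (m - 1) * Polynomial.bernoulli n
                + Polynomial.bernoulli m * (((n : ℕ) : ℚ[X]) * Polynomial.bernoulli (n - 1))
              = Polynomial.C ((m : ℚ))
                  * (Polynomial.bernoulli (m - 1) * Polynomial.bernoulli n)
                + Polynomial.C ((n : ℚ))
                  * (Polynomial.bernoulli m * Polynomial.bernoulli (n - 1)) := by
            rw [Polynomial.C_eq_natCast, Polynomial.C_eq_natCast]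
            ring
          rw [hre, ih (m - 1) n (by omega) (by omega) (by omega),
            ih m (n - 1) (by omega) (by omega) (by omega), step_poly m n (by omega) (by omega)]
        · rw [L_mul_bernoulli n (by omega) m (by omega), L_rhsQ m n (by omega) (by omega)]
          rfl

theorem bernoulli_poly_product (n1 n2 : ℕ) (h1 : 0 < n1) (h2 : 0 < n2) (q : ℝ) :
    (Polynomial.aeval q (Polynomial.bernoulli n1))
        * (Polynomial.aeval q (Polynomial.bernoulli n2))
      = (∑ k ∈ Finset.range (max (n1 / 2) (n2 / 2) + 1),
            ((n1 : ℝ) * (Nat.choose n2 (2 * k) : ℝ) + (n2 : ℝ) * (Nat.choose n1 (2 * k) : ℝ))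
              * (((bernoulli (2 * k) : ℚ) : ℝ) / ((n1 + n2 - 2 * k : ℕ) : ℝ))
              * (Polynomial.aeval q (Polynomial.bernoulli (n1 + n2 - 2 * k))))
        + (-1) ^ (n1 + 1) * ((Nat.factorial n1 : ℝ) * (Nat.factorial n2 : ℝ)
            / (Nat.factorial (n1 + n2) : ℝ)) * ((bernoulli (n1 + n2) : ℚ) : ℝ) := by
  have h := mainQ (n1 + n2) n1 n2 le_rfl h1 h2
  calc (Polynomial.aeval q (Polynomial.bernoulli n1))
        * (Polynomial.aeval q (Polynomial.bernoulli n2))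
      = Polynomial.aeval q (rhsQ n1 n2) := by rw [← map_mul]; exact congrArg _ h
    _ = _ := by
      unfold rhsQ
      rw [map_add, map_sum, Polynomial.aeval_C, eq_ratCast (algebraMap ℚ ℝ)]
      congr 1
      · refine Finset.sum_congr rfl fun k hk => ?_
        rw [map_mul, Polynomial.aeval_C, eq_ratCast (algebraMap ℚ ℝ)]
        unfold coefQ
        push_cast
        ring
      · unfold constQ
        push_cast
        ring
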